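/- Bound on the gradient correction term M. Assume each F k is differentiable with L-Lipschitz gradient, let μ > 0, μ̄ > 0, wᵗ ∈ E, and 0 ≤ γ ≤ 1. For each k, let w k⁺ be a γ-inexact solution of min h k (i.e. ‖∇F k (w k⁺) + μ·(w k⁺ − wᵗ)‖ ≤ γ·‖∇F k (wᵗ)‖) and assume ‖w k⁺ − wᵗ‖ ≤ ((1+γ)/μ̄)·‖∇F k (wᵗ)‖. If the local functions are B-dissimilar at wᵗ (∑ k, p k·‖∇F k (wᵗ)‖² ≤ B²·‖∇f(wᵗ)‖², B ≥ 0), then the averaged iterate w̄ = ∑ k, p k · w k⁺ satisfies ‖μ·(wᵗ − w̄) − ∇f(wᵗ)‖ ≤ (L·(1+γ)/μ̄ + γ)·B·‖∇f(wᵗ)‖. -/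

import Mathlib

open scoped BigOperators

/-- Bound on the gradient correction term `M`. -/
theorem gradient_correction_bound
    {E : Type*} [NormedAddCommGroup E] [InnerProductSpace ℝ E] [CompleteSpace E]
    {N : ℕ} (hN : 1 ≤ N) (p : Fin N → ℝ)
    (hp : ∀ k, 0 ≤ p k) (hp1 : ∑ k, p k = 1)
    (F : Fin N → E → ℝ) (f : E → ℝ) (hf : ∀ w, f w = ∑ k, p k * F k w)
    {L : ℝ} (hL : 0 ≤ L)
    (hFdiff : ∀ k, Differentiable ℝ (F k))
    (hFlip : ∀ k, LipschitzWith (Real.toNNReal L) (gradient (F k)))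
    {μ μbar : ℝ} (hμ : 0 < μ) (hμbar : 0 < μbar)
    (wt : E) {γ : ℝ} (hγ0 : 0 ≤ γ) (hγ1 : γ ≤ 1)
    (wplus : Fin N → E)
    (hinexact : ∀ k,
      ‖gradient (F k) (wplus k) + μ • (wplus k - wt)‖ ≤ γ * ‖gradient (F k) wt‖)
    (hdist : ∀ k, ‖wplus k - wt‖ ≤ ((1 + γ) / μbar) * ‖gradient (F k) wt‖)
    {B : ℝ} (hB : 0 ≤ B)
    (hdissim : ∑ k, p k * ‖gradient (F k) wt‖ ^ 2 ≤ B ^ 2 * ‖gradient f wt‖ ^ 2) :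
    ‖μ • (wt - ∑ k, p k • wplus k) - gradient f wt‖
      ≤ (L * (1 + γ) / μbar + γ) * B * ‖gradient f wt‖ := by
  -- gradient of f
  have hgradf : gradient f wt = ∑ k, p k • gradient (F k) wt := by
    have h : HasGradientAt f (∑ k, p k • gradient (F k) wt) wt := by
      rw [hasGradientAt_iff_hasFDerivAt]
      have : HasFDerivAt (fun w => ∑ k, p k * F k w)
          (∑ k, p k • (InnerProductSpace.toDual ℝ E (gradient (F k) wt) : E →L[ℝ] ℝ)) wt := by
        apply HasFDerivAt.fun_sum
        intro k _
        exact (((hFdiff k wt).hasGradientAt.hasFDerivAt)).const_mul (p k)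
      have heq : (fun w => ∑ k, p k * F k w) = f := by
        funext w; rw [hf w]
      rw [heq] at this
      convert this using 1
      · rfl
      simp [map_sum, map_smul]
    exact h.gradient
  set C := L * (1 + γ) / μbar + γ with hC
  have hC0 : 0 ≤ C := by positivity
  -- rewrite the vector
  have hvec : μ • (wt - ∑ k, p k • wplus k) - gradient f wt
      = ∑ k, p k • (μ • (wt - wplus k) - gradient (F k) wt) := by
    rw [hgradf]
    have h1 : μ • (wt : E) = ∑ k, p k • (μ • wt) := by
      rw [← Finset.sum_smul, hp1, one_smul]
    have h2 : μ • (∑ k, p k • wplus k) = ∑ k, p k • (μ • wplus k) := by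
      rw [Finset.smul_sum]
      exact Finset.sum_congr rfl fun k _ => smul_comm _ _ _
    rw [smul_sub, h1, h2, ← Finset.sum_sub_distrib, ← Finset.sum_sub_distrib]
    refine Finset.sum_congr rfl fun k _ => ?_
    module
  rw [hvec]
  -- termwise bound
  have hterm : ∀ k, ‖μ • (wt - wplus k) - gradient (F k) wt‖ ≤ C * ‖gradient (F k) wt‖ := by
    intro k
    have h1 : μ • (wt - wplus k) - gradient (F k) wt
        = -((gradient (F k) (wplus k) + μ • (wplus k - wt))
          + (gradient (F k) wt - gradient (F k) (wplus k))) := by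
      module
    rw [h1, norm_neg]
    calc ‖(gradient (F k) (wplus k) + μ • (wplus k - wt))
          + (gradient (F k) wt - gradient (F k) (wplus k))‖
        ≤ ‖gradient (F k) (wplus k) + μ • (wplus k - wt)‖
          + ‖gradient (F k) wt - gradient (F k) (wplus k)‖ := norm_add_le _ _
      _ ≤ γ * ‖gradient (F k) wt‖ + L * ‖wplus k - wt‖ := by
          apply add_le_add (hinexact k)
          have := (hFlip k).dist_le_mul wt (wplus k)
          simp only [dist_eq_norm] at this
          calc ‖gradient (F k) wt - gradient (F k) (wplus k)‖ ≤
              (Real.toNNReal L : ℝ) * ‖wt - wplus k‖ := this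
            _ = L * ‖wplus k - wt‖ := by
                rw [Real.coe_toNNReal L hL, norm_sub_rev]
      _ ≤ γ * ‖gradient (F k) wt‖ + L * (((1 + γ) / μbar) * ‖gradient (F k) wt‖) := by
          apply add_le_add_right
          exact mul_le_mul_of_nonneg_left (hdist k) hL
      _ = C * ‖gradient (F k) wt‖ := by rw [hC]; ring
  -- triangle inequality
  have h2 : ‖∑ k, p k • (μ • (wt - wplus k) - gradient (F k) wt)‖
      ≤ C * ∑ k, p k * ‖gradient (F k) wt‖ := by
    calc ‖∑ k, p k • (μ • (wt - wplus k) - gradient (F k) wt)‖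
        ≤ ∑ k, ‖p k • (μ • (wt - wplus k) - gradient (F k) wt)‖ := norm_sum_le _ _
      _ ≤ ∑ k, p k * (C * ‖gradient (F k) wt‖) := by
          apply Finset.sum_le_sum
          intro k _
          rw [norm_smul, Real.norm_eq_abs, abs_of_nonneg (hp k)]
          exact mul_le_mul_of_nonneg_left (hterm k) (hp k)
      _ = C * ∑ k, p k * ‖gradient (F k) wt‖ := by
          rw [Finset.mul_sum]; apply Finset.sum_congr rfl; intros; ring
  -- Cauchy–Schwarz / Jensen
  have hCS : (∑ k, p k * ‖gradient (F k) wt‖) ^ 2 ≤ ∑ k, p k * ‖gradient (F k) wt‖ ^ 2 := by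
    have key : ∀ (g : Fin N → ℝ), (∑ k, p k * g k) ^ 2 ≤ (∑ k, p k) * ∑ k, p k * g k ^ 2 := by
      intro g
      have := Finset.sum_mul_sq_le_sq_mul_sq Finset.univ
        (fun k => Real.sqrt (p k)) (fun k => Real.sqrt (p k) * g k)
      calc (∑ k, p k * g k) ^ 2
          = (∑ k, Real.sqrt (p k) * (Real.sqrt (p k) * g k)) ^ 2 := by
            congr 1; apply Finset.sum_congr rfl; intro k _
            rw [← mul_assoc, Real.mul_self_sqrt (hp k)]
        _ ≤ (∑ k, Real.sqrt (p k) ^ 2) * ∑ k, (Real.sqrt (p k) * g k) ^ 2 := this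
        _ = (∑ k, p k) * ∑ k, p k * g k ^ 2 := by
            congr 1
            · apply Finset.sum_congr rfl; intro k _; exact Real.sq_sqrt (hp k)
            · apply Finset.sum_congr rfl; intro k _
              rw [mul_pow, Real.sq_sqrt (hp k)]
    have := key (fun k => ‖gradient (F k) wt‖)
    rwa [hp1, one_mul] at this
  have h3 : ∑ k, p k * ‖gradient (F k) wt‖ ≤ B * ‖gradient f wt‖ := by
    have hnn : 0 ≤ ∑ k, p k * ‖gradient (F k) wt‖ :=
      Finset.sum_nonneg fun k _ => mul_nonneg (hp k) (norm_nonneg _)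
    have hsq : (∑ k, p k * ‖gradient (F k) wt‖) ^ 2 ≤ (B * ‖gradient f wt‖) ^ 2 := by
      calc (∑ k, p k * ‖gradient (F k) wt‖) ^ 2
          ≤ ∑ k, p k * ‖gradient (F k) wt‖ ^ 2 := hCS
        _ ≤ B ^ 2 * ‖gradient f wt‖ ^ 2 := hdissim
        _ = (B * ‖gradient f wt‖) ^ 2 := by ring
    nlinarith [hsq, hnn, mul_nonneg hB (norm_nonneg (gradient f wt))]
  calc ‖∑ k, p k • (μ • (wt - wplus k) - gradient (F k) wt)‖
      ≤ C * ∑ k, p k * ‖gradient (F k) wt‖ := h2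
    _ ≤ C * (B * ‖gradient f wt‖) := mul_le_mul_of_nonneg_left h3 hC0
    _ = C * B * ‖gradient f wt‖ := by ring
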